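/- Let α > 1/2 and γ > 0. Then for every t ≥ 0, (γ / Γ(2α − 1)) ∫_0^t (t − τ)^{2α−2} E_{2α−1}(γ τ^{2α−1}) dτ ≤ E_{2α−1}(γ t^{2α−1}). -/

import Mathlib

open MeasureTheory intervalIntegral Set Filter


/-- Integrability of the Beta-type kernel on `(0, t)`. -/
lemma betaKernel_intervalIntegrable {a b t : ℝ} (ha : 0 < a) (hb : 0 < b) (ht : 0 < t) :
    IntervalIntegrable (fun τ => τ ^ (a - 1) * (t - τ) ^ (b - 1)) volume 0 t := by
  have h1 : IntervalIntegrable (fun τ : ℝ => τ ^ (a - 1) * (t - τ) ^ (b - 1))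
      volume 0 (t / 2) := by
    apply (intervalIntegrable_rpow' (by linarith)).mul_continuousOn
    apply ContinuousOn.rpow_const
    · exact (continuous_const.sub continuous_id).continuousOn
    · intro x hx
      rw [Set.uIcc_of_le (by linarith)] at hx
      refine Or.inl ?_
      have := hx.2
      intro h
      have : t - x > 0 := by linarith
      linarith [h ▸ this]
  have h2 : IntervalIntegrable (fun τ : ℝ => τ ^ (a - 1) * (t - τ) ^ (b - 1))
      volume (t / 2) t := by
    have base : IntervalIntegrable (fun τ : ℝ => (t - τ) ^ (b - 1)) volume (t / 2) t := by
      have h := (intervalIntegrable_rpow' (r := b - 1) (a := t / 2) (b := 0)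
        (by linarith)).comp_sub_left t
      have e1 : t - t / 2 = t / 2 := by ring
      rw [e1, sub_zero] at h
      exact h
    apply base.continuousOn_mul
    apply ContinuousOn.rpow_const continuousOn_id
    intro x hx
    rw [Set.uIcc_of_le (by linarith)] at hx
    refine Or.inl ?_
    simp only [id_eq]
    intro h
    rw [h] at hx
    linarith [hx.1]
  exact h1.trans h2

/-- Real Beta integral identity, scaled. -/
lemma integral_betaKernel {a b t : ℝ} (ha : 0 < a) (hb : 0 < b) (ht : 0 < t) :
    ∫ τ in (0:ℝ)..t, τ ^ (a - 1) * (t - τ) ^ (b - 1)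
      = Real.Gamma a * Real.Gamma b / Real.Gamma (a + b) * t ^ (a + b - 1) := by
  have hC : ∫ x in (0:ℝ)..t, (x : ℂ) ^ ((a : ℂ) - 1) * ((t : ℂ) - x) ^ ((b : ℂ) - 1)
      = (t : ℂ) ^ ((a : ℂ) + b - 1) * Complex.betaIntegral a b :=
    Complex.betaIntegral_scaled a b ht
  have hGab : Real.Gamma (a + b) ≠ 0 := (Real.Gamma_pos_of_pos (by linarith)).ne'
  have hbeta : Complex.betaIntegral a b
      = ((Real.Gamma a * Real.Gamma b / Real.Gamma (a + b) : ℝ) : ℂ) := by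
    have h := Complex.Gamma_mul_Gamma_eq_betaIntegral (s := a) (t := b)
      (by simpa using ha) (by simpa using hb)
    rw [show ((a : ℂ) + b) = ((a + b : ℝ) : ℂ) by push_cast; ring] at h
    rw [Complex.Gamma_ofReal, Complex.Gamma_ofReal, Complex.Gamma_ofReal] at h
    have h2 : ((Real.Gamma (a + b) : ℝ) : ℂ) ≠ 0 := by exact_mod_cast hGab
    push_cast
    rw [eq_div_iff h2]
    linear_combination -h
  have hEq : ∫ x in (0:ℝ)..t, (x : ℂ) ^ ((a : ℂ) - 1) * ((t : ℂ) - x) ^ ((b : ℂ) - 1)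
      = ((∫ τ in (0:ℝ)..t, τ ^ (a - 1) * (t - τ) ^ (b - 1) : ℝ) : ℂ) := by
    rw [← intervalIntegral.integral_ofReal]
    apply intervalIntegral.integral_congr
    intro x hx
    rw [Set.uIcc_of_le ht.le] at hx
    have hx0 : (0:ℝ) ≤ x := hx.1
    have hx1 : (0:ℝ) ≤ t - x := by linarith [hx.2]
    push_cast
    rw [Complex.ofReal_cpow hx0, Complex.ofReal_cpow hx1]
    push_cast
    ring_nf
  have htpow : ((t : ℂ) ^ ((a : ℂ) + b - 1)) = ((t ^ (a + b - 1) : ℝ) : ℂ) := by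
    rw [Complex.ofReal_cpow ht.le]
    push_cast
    ring_nf
  rw [hEq, hbeta, htpow, ← Complex.ofReal_mul] at hC
  have hR : ∫ τ in (0:ℝ)..t, τ ^ (a - 1) * (t - τ) ^ (b - 1)
      = t ^ (a + b - 1) * (Real.Gamma a * Real.Gamma b / Real.Gamma (a + b)) := by
    exact_mod_cast hC
  rw [hR]; ring

/-- Gamma growth: for `0 < β < 1` and `1 ≤ u`, `u Γ(u) ≤ 2 u^(1-β) Γ(u+β)`. -/
lemma gamma_growth {β u : ℝ} (hβ : 0 < β) (hβ1 : β < 1) (hu : 1 ≤ u) :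
    u * Real.Gamma u ≤ 2 * u ^ (1 - β) * Real.Gamma (u + β) := by
  have hu0 : 0 < u := by linarith
  have hGuβ : 0 < Real.Gamma (u + β) := Real.Gamma_pos_of_pos (by linarith)
  have hkey : Real.Gamma (u + 1) ≤ Real.Gamma (u + β) ^ β * Real.Gamma (u + β + 1) ^ (1 - β) := by
    have h := @Real.Gamma_mul_add_mul_le_rpow_Gamma_mul_rpow_Gamma (u + β) (u + β + 1) β (1 - β)
      (by linarith) (by linarith) hβ (by linarith) (by ring)
    convert h using 2
    ring
  rw [Real.Gamma_add_one (show u ≠ 0 by positivity)] at hkey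
  rw [Real.Gamma_add_one (show u + β ≠ 0 by positivity)] at hkey
  have hexp : ((u + β) * Real.Gamma (u + β)) ^ (1 - β)
      = (u + β) ^ (1 - β) * Real.Gamma (u + β) ^ (1 - β) :=
    Real.mul_rpow (by linarith) hGuβ.le
  rw [hexp] at hkey
  have hcomb : Real.Gamma (u + β) ^ β * ((u + β) ^ (1 - β) * Real.Gamma (u + β) ^ (1 - β))
      = (u + β) ^ (1 - β) * Real.Gamma (u + β) := by
    rw [mul_comm (Real.Gamma (u + β) ^ β), mul_assoc, ← Real.rpow_add hGuβ]
    norm_num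
  rw [hcomb] at hkey
  have hub : (u + β) ^ (1 - β) ≤ 2 * u ^ (1 - β) := by
    have h1 : (u + β) ^ (1 - β) ≤ (2 * u) ^ (1 - β) :=
      Real.rpow_le_rpow (by linarith) (by linarith) (by linarith)
    have h2 : ((2:ℝ) * u) ^ (1 - β) = 2 ^ (1 - β) * u ^ (1 - β) :=
      Real.mul_rpow (by norm_num) hu0.le
    have h3 : (2:ℝ) ^ (1 - β) ≤ 2 := by
      nth_rewrite 2 [show (2:ℝ) = 2 ^ (1:ℝ) by norm_num]
      exact Real.rpow_le_rpow_of_exponent_le (by norm_num) (by linarith)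
    calc (u + β) ^ (1 - β) ≤ 2 ^ (1 - β) * u ^ (1 - β) := by rw [← h2]; exact h1
      _ ≤ 2 * u ^ (1 - β) :=
          mul_le_mul_of_nonneg_right h3 (Real.rpow_nonneg hu0.le _)
  calc u * Real.Gamma u ≤ (u + β) ^ (1 - β) * Real.Gamma (u + β) := hkey
    _ ≤ 2 * u ^ (1 - β) * Real.Gamma (u + β) :=
        mul_le_mul_of_nonneg_right hub hGuβ.le

/-- Summability of the Mittag-Leffler series for nonnegative argument. -/
lemma summable_mittagLeffler {β x : ℝ} (hβ : 0 < β) (hx : 0 ≤ x) :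
    Summable (fun k : ℕ => x ^ k / Real.Gamma (β * k + 1)) := by
  apply summable_of_ratio_norm_eventually_le (r := 1/2) (by norm_num)
  have hu : ∀ k : ℕ, (1:ℝ) ≤ β * k + 1 := fun k => by
    have := mul_nonneg hβ.le (Nat.cast_nonneg (α := ℝ) k); linarith
  have hG : ∀ k : ℕ, 0 < Real.Gamma (β * k + 1) := fun k =>
    Real.Gamma_pos_of_pos (by positivity)
  have hG' : ∀ k : ℕ, 0 < Real.Gamma (β * k + 1 + β) := fun k =>
    Real.Gamma_pos_of_pos (by positivity)
  have htend : Tendsto (fun k : ℕ => β * k + 1) atTop atTop := by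
    apply tendsto_atTop_add_const_right
    exact Tendsto.const_mul_atTop hβ tendsto_natCast_atTop_atTop
  have key : ∀ᶠ k : ℕ in atTop,
      x * Real.Gamma (β * k + 1) ≤ (1/2) * Real.Gamma (β * k + 1 + β) := by
    rcases le_or_gt 1 β with hβ1 | hβ1
    · filter_upwards [htend.eventually_ge_atTop (2 * x)] with k hk
      have hmono := Real.Gamma_strictMonoOn_Ici.monotoneOn
      have h1 : Real.Gamma (β * k + 1 + 1) ≤ Real.Gamma (β * k + 1 + β) := by
        apply hmono (Set.mem_Ici.mpr (by linarith [hu k])) (Set.mem_Ici.mpr (by linarith [hu k]))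
        linarith
      rw [Real.Gamma_add_one (show β * (k:ℝ) + 1 ≠ 0 by positivity)] at h1
      nlinarith [hG k, hu k]
    · have htend2 : Tendsto (fun k : ℕ => (β * k + 1) ^ β) atTop atTop :=
        (tendsto_rpow_atTop hβ).comp htend
      filter_upwards [htend2.eventually_ge_atTop (4 * x)] with k hk
      have hgrow := gamma_growth hβ hβ1 (hu k)
      have hup : (β * (k:ℝ) + 1) ^ β * (β * (k:ℝ) + 1) ^ (1 - β) = β * (k:ℝ) + 1 := by
        rw [← Real.rpow_add (by positivity)]; norm_num
      have hpos1 : (0:ℝ) < (β * (k:ℝ) + 1) ^ (1 - β) := Real.rpow_pos_of_pos (by positivity) _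
      have h2 : (β * (k:ℝ) + 1) ^ β * Real.Gamma (β * k + 1) ≤ 2 * Real.Gamma (β * k + 1 + β) := by
        have h3 : ((β * (k:ℝ) + 1) ^ β * Real.Gamma (β * k + 1)) * (β * (k:ℝ) + 1) ^ (1 - β)
            ≤ (2 * Real.Gamma (β * k + 1 + β)) * (β * (k:ℝ) + 1) ^ (1 - β) := by
          calc ((β * (k:ℝ) + 1) ^ β * Real.Gamma (β * k + 1)) * (β * (k:ℝ) + 1) ^ (1 - β)
              = (β * (k:ℝ) + 1) ^ β * (β * (k:ℝ) + 1) ^ (1 - β) * Real.Gamma (β * k + 1) := by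
                ring
            _ = (β * (k:ℝ) + 1) * Real.Gamma (β * k + 1) := by rw [hup]
            _ ≤ 2 * (β * (k:ℝ) + 1) ^ (1 - β) * Real.Gamma (β * ↑k + 1 + β) := hgrow
            _ = (2 * Real.Gamma (β * k + 1 + β)) * (β * (k:ℝ) + 1) ^ (1 - β) := by ring
        exact le_of_mul_le_mul_right h3 hpos1
      nlinarith [hG k, Real.rpow_nonneg (show (0:ℝ) ≤ β * k + 1 by positivity) β]
  filter_upwards [key] with k hk
  have hterm : ∀ j : ℕ, (0:ℝ) ≤ x ^ j / Real.Gamma (β * j + 1) := fun j =>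
    div_nonneg (pow_nonneg hx j) (hG j).le
  rw [Real.norm_of_nonneg (hterm (k+1)), Real.norm_of_nonneg (hterm k)]
  have hcast : β * ((k:ℕ) + 1 : ℕ) + 1 = β * k + 1 + β := by push_cast; ring
  rw [hcast, ← mul_div_assoc, div_le_div_iff₀ (hG' k) (hG k)]
  calc x ^ (k + 1) * Real.Gamma (β * k + 1)
      = x ^ k * (x * Real.Gamma (β * k + 1)) := by ring
    _ ≤ x ^ k * ((1/2) * Real.Gamma (β * k + 1 + β)) :=
        mul_le_mul_of_nonneg_left hk (pow_nonneg hx k)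
    _ = 1 / 2 * x ^ k * Real.Gamma (β * k + 1 + β) := by ring


/-- The Mittag-Leffler function `E_β(x) = ∑_{k=0}^∞ x^k / Γ(β k + 1)`. -/
noncomputable def mittagLeffler (β x : ℝ) : ℝ :=
  ∑' k : ℕ, x ^ k / Real.Gamma (β * k + 1)

/-- Key inequality for positive `t`. -/
lemma mittagLeffler_key {β γ t : ℝ} (hβ : 0 < β) (hγ : 0 < γ) (ht : 0 < t) :
    (γ / Real.Gamma β) *
        ∫ τ in (0:ℝ)..t, (t - τ) ^ (β - 1) * mittagLeffler β (γ * τ ^ β) ≤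
      mittagLeffler β (γ * t ^ β) := by
  have hΓβ : 0 < Real.Gamma β := Real.Gamma_pos_of_pos hβ
  set x : ℝ := γ * t ^ β with hxdef
  have hx : 0 ≤ x := mul_nonneg hγ.le (Real.rpow_nonneg ht.le β)
  have hsum : Summable (fun k : ℕ => x ^ k / Real.Gamma (β * k + 1)) :=
    summable_mittagLeffler hβ hx
  set g : ℕ → ℝ → ℝ := fun k τ => (t - τ) ^ (β - 1) * ((γ * τ ^ β) ^ k / Real.Gamma (β * k + 1))
    with hgdef
  have hGk : ∀ k : ℕ, 0 < Real.Gamma (β * k + 1) := fun k =>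
    Real.Gamma_pos_of_pos (by positivity)
  -- the integrand is the tsum of the g k
  have hintegrand : ∀ τ : ℝ, (t - τ) ^ (β - 1) * mittagLeffler β (γ * τ ^ β) = ∑' k, g k τ := by
    intro τ
    rw [mittagLeffler, ← tsum_mul_left]
  -- value of each term integral
  have hval : ∀ k : ℕ, ∫ τ in Ioc (0:ℝ) t, g k τ
      = (Real.Gamma β / γ) * (x ^ (k + 1) / Real.Gamma (β * (k + 1 : ℕ) + 1)) := by
    intro k
    have hae : ∀ τ ∈ Ioc (0:ℝ) t, g k τ
        = (γ ^ k / Real.Gamma (β * k + 1)) * (τ ^ (β * k + 1 - 1) * (t - τ) ^ (β - 1)) := by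
      intro τ hτ
      simp only [hgdef]
      rw [mul_pow, ← Real.rpow_natCast (τ ^ β) k, ← Real.rpow_mul hτ.1.le]
      have : β * k + 1 - 1 = β * k := by ring
      rw [this]
      ring
    rw [setIntegral_congr_fun measurableSet_Ioc hae, MeasureTheory.integral_const_mul,
      ← intervalIntegral.integral_of_le ht.le,
      integral_betaKernel (by positivity) hβ ht]
    have e1 : β * k + 1 + β - 1 = β * (k + 1 : ℕ) := by push_cast; ring
    have e2 : β * k + 1 + β = β * (k + 1 : ℕ) + 1 := by push_cast; ring
    rw [e1, e2]
    have hxpow : x ^ (k + 1) = γ ^ (k + 1) * t ^ (β * (k + 1 : ℕ)) := by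
      rw [hxdef, mul_pow, ← Real.rpow_natCast (t ^ β) (k + 1), ← Real.rpow_mul ht.le]
    rw [hxpow]
    field_simp
    ring
  -- integrability of each term
  have hInt : ∀ k : ℕ, IntegrableOn (g k) (Ioc (0:ℝ) t) := by
    intro k
    have h1 : IntegrableOn
        (fun τ => (γ ^ k / Real.Gamma (β * k + 1)) * (τ ^ (β * k + 1 - 1) * (t - τ) ^ (β - 1)))
        (Ioc (0:ℝ) t) := by
      apply Integrable.const_mul
      exact ((betaKernel_intervalIntegrable (by positivity) hβ ht).1)
    apply h1.congr_fun ?_ measurableSet_Ioc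
    intro τ hτ
    simp only [hgdef]
    rw [mul_pow, ← Real.rpow_natCast (τ ^ β) k, ← Real.rpow_mul hτ.1.le]
    have : β * k + 1 - 1 = β * k := by ring
    rw [this]
    ring
  -- nonnegativity of g k on Ioc 0 t
  have hg_nonneg : ∀ k : ℕ, ∀ τ ∈ Ioc (0:ℝ) t, 0 ≤ g k τ := by
    intro k τ hτ
    have h1 : (0:ℝ) ≤ t - τ := by linarith [hτ.2]
    have h2 : (0:ℝ) ≤ γ * τ ^ β := mul_nonneg hγ.le (Real.rpow_nonneg hτ.1.le β)
    exact mul_nonneg (Real.rpow_nonneg h1 _)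
      (div_nonneg (pow_nonneg h2 k) (hGk k).le)
  -- measurability
  have hmeas : ∀ k : ℕ, AEStronglyMeasurable (g k) (volume.restrict (Ioc (0:ℝ) t)) := by
    intro k
    apply Measurable.aestronglyMeasurable
    simp only [hgdef]
    fun_prop
  -- shifted series summable
  have hshift : Summable (fun k : ℕ => (Real.Gamma β / γ) *
      (x ^ (k + 1) / Real.Gamma (β * (k + 1 : ℕ) + 1))) := by
    apply Summable.mul_left
    exact ((summable_nat_add_iff 1).mpr hsum)
  -- interchange integral and sum
  have hswap : ∫ τ in Ioc (0:ℝ) t, ∑' k, g k τ = ∑' k, ∫ τ in Ioc (0:ℝ) t, g k τ := by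
    apply MeasureTheory.integral_tsum hmeas
    have hlin : ∀ k : ℕ, ∫⁻ τ in Ioc (0:ℝ) t, ‖g k τ‖ₑ
        = ENNReal.ofReal ((Real.Gamma β / γ) * (x ^ (k + 1) / Real.Gamma (β * (k + 1 : ℕ) + 1))) := by
      intro k
      rw [← hval k, MeasureTheory.ofReal_integral_eq_lintegral_ofReal (hInt k)
        ((ae_restrict_iff' measurableSet_Ioc).mpr (Filter.Eventually.of_forall (hg_nonneg k)))]
      apply lintegral_congr_ae
      filter_upwards [(ae_restrict_iff' measurableSet_Ioc).mpr
        (Filter.Eventually.of_forall (hg_nonneg k))] with τ hτ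
      rw [← Real.enorm_eq_ofReal hτ]
    rw [tsum_congr hlin, ← ENNReal.ofReal_tsum_of_nonneg (fun k =>
      mul_nonneg (div_nonneg hΓβ.le hγ.le)
        (div_nonneg (pow_nonneg hx _) (hGk (k+1)).le)) hshift]
    exact ENNReal.ofReal_ne_top
  -- put everything together
  rw [intervalIntegral.integral_of_le ht.le]
  simp_rw [hintegrand]
  rw [hswap, tsum_congr hval, tsum_mul_left, ← mul_assoc]
  have hc : γ / Real.Gamma β * (Real.Gamma β / γ) = 1 := by
    field_simp
  rw [hc, one_mul]
  have hfull := hsum.tsum_eq_zero_add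
  have ha0 : x ^ 0 / Real.Gamma (β * (0:ℕ) + 1) = 1 := by
    simp [Real.Gamma_one]
  rw [ha0] at hfull
  have : mittagLeffler β x = 1 + ∑' k : ℕ, x ^ (k + 1) / Real.Gamma (β * (k + 1 : ℕ) + 1) := by
    rw [mittagLeffler]
    exact_mod_cast hfull
  rw [this]
  linarith [(tsum_nonneg (fun k : ℕ =>
    div_nonneg (pow_nonneg hx (k+1)) (hGk (k+1)).le) :
    (0:ℝ) ≤ ∑' k : ℕ, x ^ (k + 1) / Real.Gamma (β * (k + 1 : ℕ) + 1))]

/-- For `α > 1/2`, `γ > 0` and `t ≥ 0`,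
`(γ / Γ(2α − 1)) ∫_0^t (t − τ)^(2α−2) E_{2α−1}(γ τ^(2α−1)) dτ ≤ E_{2α−1}(γ t^(2α−1))`. -/
theorem mittagLeffler_kernel_integral_le (α γ : ℝ) (hα : 1 / 2 < α) (hγ : 0 < γ)
    (t : ℝ) (ht : 0 ≤ t) :
    (γ / Real.Gamma (2 * α - 1)) *
        ∫ τ in (0:ℝ)..t,
          (t - τ) ^ (2 * α - 2) * mittagLeffler (2 * α - 1) (γ * τ ^ (2 * α - 1)) ≤
      mittagLeffler (2 * α - 1) (γ * t ^ (2 * α - 1)) := by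
  have hβ : 0 < 2 * α - 1 := by linarith
  have e1 : 2 * α - 2 = (2 * α - 1) - 1 := by ring
  rw [e1]
  rcases eq_or_lt_of_le ht with h0 | ht'
  · rw [← h0, intervalIntegral.integral_same, mul_zero, mittagLeffler]
    apply tsum_nonneg
    intro k
    apply div_nonneg
    · exact pow_nonneg (mul_nonneg hγ.le (Real.rpow_nonneg le_rfl _)) k
    · exact (Real.Gamma_pos_of_pos (by positivity)).le
  · exact mittagLeffler_key hβ hγ ht'
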